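/- arXiv:0903.5373 — 2 statements merged into one kernel-verified Lean document; each statement's English description precedes it below -/
import Mathlib

section
/- Given i.i.d. nonnegative random variables (or any exchangeable family) P_1,...,P_m and their order statistics P_{(1)} ≤ ... ≤ P_{(m)}, and constants 0 = c_0 ≤ c_1 ≤ ... ≤ c_m ≤ 1: for each j and each index i, the event {P_{(1)} ≤ c_1, ..., P_{(m)} ≤ c_m, c_{j-1} < P_i ≤ c_j} equals the event {Q_{(1)} ≤ c_1, ..., Q_{(j-1)} ≤ c_{j-1}, Q_{(j)} ≤ c_{j+1}, ..., Q_{(m-1)} ≤ c_m, c_{j-1} < P_i ≤ c_j}, where Q_{(1)} ≤ ... ≤ Q_{(m-1)} are the order statistics of the m−1 values {P_k : k ≠ i}. -/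
open Finset

/-- Order statistics: `orderStat p k` is the (k+1)-st smallest of the values `p`. -/
noncomputable def orderStat {n : ℕ} (p : Fin n → ℝ) : Fin n → ℝ :=
  fun k => p (Tuple.sort p k)

lemma mono_le_iff_count {n : ℕ} {f : Fin n → ℝ} (hf : Monotone f) (k : Fin n) (t : ℝ) :
    f k ≤ t ↔ (k : ℕ) + 1 ≤ (univ.filter (fun a => f a ≤ t)).card := by
  constructor
  · intro h
    have hsub : Iic k ⊆ univ.filter (fun a => f a ≤ t) := by
      intro l hl
      simp only [mem_Iic] at hl
      simp only [mem_filter, mem_univ, true_and]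
      exact le_trans (hf hl) h
    calc (k : ℕ) + 1 = (Iic k).card := by rw [Fin.card_Iic]
      _ ≤ _ := card_le_card hsub
  · intro h
    by_contra hc
    push_neg at hc
    have hsub : univ.filter (fun a => f a ≤ t) ⊆ Iio k := by
      intro l hl
      simp only [mem_filter, mem_univ, true_and] at hl
      simp only [mem_Iio]
      by_contra hlk
      push_neg at hlk
      exact absurd (le_trans (hf hlk) hl) (not_le.mpr hc)
    have := card_le_card hsub
    rw [Fin.card_Iio] at this
    omega

lemma orderStat_le_iff {n : ℕ} (p : Fin n → ℝ) (k : Fin n) (t : ℝ) :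
    orderStat p k ≤ t ↔ (k : ℕ) + 1 ≤ (univ.filter (fun a => p a ≤ t)).card := by
  have h := mono_le_iff_count (Tuple.monotone_sort p) k t
  simp only [Function.comp] at h
  rw [orderStat, h]
  have hcard : (univ.filter (fun a => p (Tuple.sort p a) ≤ t)).card
      = (univ.filter (fun a => p a ≤ t)).card := by
    apply Finset.card_bij (fun a _ => Tuple.sort p a)
    · intro a ha
      simp only [mem_filter, mem_univ, true_and] at ha ⊢
      exact ha
    · intro a _ b _ hab
      exact (Tuple.sort p).injective hab
    · intro b hb
      refine ⟨(Tuple.sort p).symm b, ?_, by simp⟩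
      simp only [mem_filter, mem_univ, true_and] at hb ⊢
      simpa using hb
  rw [hcard]

/-- Pointwise set identity (3.2): for constants 0 = c_0 ≤ c_1 ≤ … ≤ c_m ≤ 1 and
1 ≤ j ≤ m (here m = n+1), the event
{P_{(1)} ≤ c_1, …, P_{(m)} ≤ c_m, c_{j-1} < P_i ≤ c_j} equals the event
{Q_{(l)} ≤ c_l for l ≤ j-1, Q_{(l)} ≤ c_{l+1} for j ≤ l ≤ m-1, c_{j-1} < P_i ≤ c_j},
where Q are the order statistics of the m−1 values with P_i removed. -/
theorem stmt_7 (n : ℕ) (p : Fin (n + 1) → ℝ) (i : Fin (n + 1)) (c : ℕ → ℝ)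
    (hc0 : c 0 = 0) (hmono : ∀ a b : ℕ, a ≤ b → b ≤ n + 1 → c a ≤ c b)
    (hc1 : c (n + 1) ≤ 1)
    (j : ℕ) (hj1 : 1 ≤ j) (hjm : j ≤ n + 1) :
    ((∀ k : Fin (n + 1), orderStat p k ≤ c ((k : ℕ) + 1)) ∧
        c (j - 1) < p i ∧ p i ≤ c j)
      ↔ ((∀ k : Fin n, orderStat (p ∘ i.succAbove) k ≤
            if (k : ℕ) + 1 < j then c ((k : ℕ) + 1) else c ((k : ℕ) + 2)) ∧
          c (j - 1) < p i ∧ p i ≤ c j) := by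
  have hST : ∀ t : ℝ, (univ.filter (fun a : Fin (n + 1) => p a ≤ t)).card
      = (univ.filter (fun a : Fin n => p (i.succAbove a) ≤ t)).card
        + (if p i ≤ t then 1 else 0) := by
    intro t
    simp only [Finset.card_filter]
    rw [Fin.sum_univ_succAbove (fun a => if p a ≤ t then 1 else 0) i]
    ring
  have hTmono : ∀ t t' : ℝ, t ≤ t' →
      (univ.filter (fun a : Fin n => p (i.succAbove a) ≤ t)).card
        ≤ (univ.filter (fun a : Fin n => p (i.succAbove a) ≤ t')).card := by
    intro t t' htt
    apply card_le_card
    intro a ha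
    simp only [mem_filter, mem_univ, true_and] at ha ⊢
    exact le_trans ha htt
  obtain ⟨j, rfl⟩ : ∃ j', j = j' + 1 := ⟨j - 1, (Nat.succ_pred_eq_of_pos hj1).symm⟩
  simp only [Nat.add_sub_cancel]
  constructor
  · rintro ⟨h, hl, hr⟩
    refine ⟨?_, hl, hr⟩
    intro k
    rw [show ((p ∘ i.succAbove) = fun a => p (i.succAbove a)) from rfl]
    rw [orderStat_le_iff]
    by_cases hk : (k : ℕ) + 1 < j + 1
    · rw [if_pos hk]
      have hne : ¬ p i ≤ c ((k : ℕ) + 1) := by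
        push_neg
        calc c ((k : ℕ) + 1) ≤ c j := hmono _ _ (by omega) (by omega)
          _ < p i := hl
      have hSk : (k : ℕ) + 1
          ≤ (univ.filter (fun a : Fin (n + 1) => p a ≤ c ((k : ℕ) + 1))).card := by
        have := (orderStat_le_iff p ⟨(k : ℕ), by omega⟩ (c ((k : ℕ) + 1))).mp
          (by simpa using h ⟨(k : ℕ), by omega⟩)
        simpa using this
      have := hST (c ((k : ℕ) + 1))
      rw [if_neg hne] at this
      omega
    · rw [if_neg hk]
      have hle : p i ≤ c ((k : ℕ) + 2) := by
        calc p i ≤ c (j + 1) := hr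
          _ ≤ c ((k : ℕ) + 2) := hmono _ _ (by omega) (by omega)
      have hSk : (k : ℕ) + 2
          ≤ (univ.filter (fun a : Fin (n + 1) => p a ≤ c ((k : ℕ) + 2))).card := by
        have := (orderStat_le_iff p ⟨(k : ℕ) + 1, by omega⟩ (c ((k : ℕ) + 2))).mp
          (by simpa using h ⟨(k : ℕ) + 1, by omega⟩)
        simp at this; omega
      have := hST (c ((k : ℕ) + 2))
      rw [if_pos hle] at this
      omega
  · rintro ⟨h, hl, hr⟩
    refine ⟨?_, hl, hr⟩
    intro k
    rw [orderStat_le_iff]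
    by_cases hk : (k : ℕ) + 1 < j + 1
    · -- l = k+1 < j+1, so l ≤ j
      have hne : ¬ p i ≤ c ((k : ℕ) + 1) := by
        push_neg
        calc c ((k : ℕ) + 1) ≤ c j := hmono _ _ (by omega) (by omega)
          _ < p i := hl
      have hTk : (k : ℕ) + 1
          ≤ (univ.filter (fun a : Fin n => p (i.succAbove a) ≤ c ((k : ℕ) + 1))).card := by
        have hkn : (k : ℕ) < n := by omega
        have := h ⟨(k : ℕ), hkn⟩
        simp only [Fin.val_mk] at this
        rw [if_pos hk] at this
        have := (orderStat_le_iff (p ∘ i.succAbove) ⟨(k : ℕ), hkn⟩ (c ((k : ℕ) + 1))).mp this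
        simpa [Function.comp] using this
      have := hST (c ((k : ℕ) + 1))
      rw [if_neg hne] at this
      omega
    · -- l = k+1 ≥ j+1
      have hle : p i ≤ c ((k : ℕ) + 1) := by
        calc p i ≤ c (j + 1) := hr
          _ ≤ c ((k : ℕ) + 1) := hmono _ _ (by omega) (by omega)
      have hTk : (k : ℕ)
          ≤ (univ.filter (fun a : Fin n => p (i.succAbove a) ≤ c ((k : ℕ) + 1))).card := by
        rcases Nat.eq_zero_or_pos (k : ℕ) with h0 | hpos
        · omega
        · have hkn : (k : ℕ) - 1 < n := by omega
          have hh := h ⟨(k : ℕ) - 1, hkn⟩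
          simp only [Fin.val_mk] at hh
          by_cases hkj : (k : ℕ) - 1 + 1 < j + 1
          · -- then k < j+1 and k+1 ≥ j+1, so k = j, bound is c k = c j ≤ c (k+1)
            rw [if_pos hkj] at hh
            have := (orderStat_le_iff (p ∘ i.succAbove) ⟨(k : ℕ) - 1, hkn⟩
              (c ((k : ℕ) - 1 + 1))).mp hh
            simp only [Fin.val_mk, Function.comp] at this
            have hmon := hTmono (c ((k : ℕ) - 1 + 1)) (c ((k : ℕ) + 1))
              (hmono _ _ (by omega) (by omega))
            omega
          · rw [if_neg hkj] at hh
            have := (orderStat_le_iff (p ∘ i.succAbove) ⟨(k : ℕ) - 1, hkn⟩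
              (c ((k : ℕ) - 1 + 2))).mp hh
            simp only [Fin.val_mk, Function.comp] at this
            have heq : (k : ℕ) - 1 + 2 = (k : ℕ) + 1 := by omega
            rw [heq] at this
            omega
      have := hST (c ((k : ℕ) + 1))
      rw [if_pos hle] at this
      omega
end

section
/- For real random variables P_1,...,P_m with order statistics P_{(1)} ≤ ... ≤ P_{(m)}, constants c_1 ≤ ... ≤ c_m, an index i and 2 ≤ r ≤ m: the event {Q_{(1)} ≤ c_1, ..., Q_{(r-1)} ≤ c_{r-1}, P_i ≤ c_{r-1}} is contained in the event {P_{(1)} ≤ c_1, ..., P_{(r)} ≤ c_r, P_i ≤ c_{r-1}}, where Q_{(k)} are the order statistics of {P_j : j ≠ i}. -/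
lemma orderStat_le_iff_s8 {m : ℕ} (p : Fin m → ℝ) (k : Fin m) (a : ℝ) :
    orderStat p k ≤ a ↔ (k : ℕ) < Fintype.card {i // p i ≤ a} := by
  have hcard : Fintype.card {i // (p ∘ Tuple.sort p) i ≤ a}
      = Fintype.card {i // p i ≤ a} :=
    Fintype.card_congr (Equiv.subtypeEquiv (Tuple.sort p) (fun i => Iff.rfl))
  have := Tuple.lt_card_le_iff_apply_le_of_monotone (f := p ∘ Tuple.sort p) (a := a)
    (Tuple.monotone_sort p) (j := k)
  rw [← Fintype.card_subtype, hcard] at this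
  exact this.symm

lemma card_le_aux {n : ℕ} (p : Fin (n + 1) → ℝ) (i : Fin (n + 1)) (a : ℝ) :
    Fintype.card {k : Fin n // p (i.succAbove k) ≤ a}
      ≤ Fintype.card {j : Fin (n + 1) // p j ≤ a} := by
  apply Fintype.card_le_of_injective (fun x => ⟨i.succAbove x.1, x.2⟩)
  intro x y hxy
  exact Subtype.ext (i.succAbove_right_injective (congrArg Subtype.val hxy))

lemma card_succ_le_aux {n : ℕ} (p : Fin (n + 1) → ℝ) (i : Fin (n + 1)) (a : ℝ)
    (hpi : p i ≤ a) :
    Fintype.card {k : Fin n // p (i.succAbove k) ≤ a} + 1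
      ≤ Fintype.card {j : Fin (n + 1) // p j ≤ a} := by
  rw [← Fintype.card_option]
  apply Fintype.card_le_of_injective
    (fun x => x.elim ⟨i, hpi⟩ (fun y => ⟨i.succAbove y.1, y.2⟩))
  intro x y hxy
  match x, y with
  | none, none => rfl
  | none, some y =>
      exact absurd (congrArg Subtype.val hxy).symm (Fin.succAbove_ne i y.1)
  | some x, none =>
      exact absurd (congrArg Subtype.val hxy) (Fin.succAbove_ne i x.1)
  | some x, some y =>
      exact congrArg some (Subtype.ext
        (i.succAbove_right_injective (congrArg Subtype.val hxy)))

/-- Inclusion (3.4), pointwise: for constants c_1 ≤ … ≤ c_m and 2 ≤ r ≤ m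
(here m = n+1), the event {Q_{(1)} ≤ c_1, …, Q_{(r-1)} ≤ c_{r-1}, P_i ≤ c_{r-1}}
is contained in {P_{(1)} ≤ c_1, …, P_{(r)} ≤ c_r, P_i ≤ c_{r-1}}, where Q are the
order statistics of the m−1 values excluding P_i. -/
theorem stmt_8 (n : ℕ) (p : Fin (n + 1) → ℝ) (i : Fin (n + 1)) (c : ℕ → ℝ)
    (hmono : ∀ a b : ℕ, 1 ≤ a → a ≤ b → b ≤ n + 1 → c a ≤ c b)
    (r : ℕ) (hr2 : 2 ≤ r) (hrm : r ≤ n + 1)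
    (h : (∀ k : Fin n, (k : ℕ) + 1 ≤ r - 1 →
            orderStat (p ∘ i.succAbove) k ≤ c ((k : ℕ) + 1)) ∧
          p i ≤ c (r - 1)) :
    (∀ k : Fin (n + 1), (k : ℕ) + 1 ≤ r → orderStat p k ≤ c ((k : ℕ) + 1)) ∧
      p i ≤ c (r - 1) := by
  obtain ⟨hq, hpi⟩ := h
  refine ⟨fun k hk => ?_, hpi⟩
  rcases lt_or_eq_of_le hk with hk' | hk'
  · -- case (k:ℕ)+1 ≤ r-1
    have hkn : (k : ℕ) < n := by omega
    have hq1 := hq ⟨(k : ℕ), hkn⟩ (by simp; omega)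
    rw [orderStat_le_iff_s8] at hq1 ⊢
    calc (k : ℕ) < _ := hq1
      _ ≤ _ := card_le_aux p i _
  · -- case (k:ℕ)+1 = r
    have hn1 : 1 ≤ n := by omega
    have hr2n : r - 2 < n := by omega
    have hq1 := hq ⟨r - 2, hr2n⟩ (by simp; omega)
    have he : r - 2 + 1 = r - 1 := by omega
    rw [he] at hq1
    rw [orderStat_le_iff_s8] at hq1
    simp only [Function.comp_def, Fin.val_mk] at hq1
    have hcard := card_succ_le_aux p i (c (r - 1)) hpi
    have : (k : ℕ) < Fintype.card {j : Fin (n + 1) // p j ≤ c (r - 1)} := by omega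
    have h1 : orderStat p k ≤ c (r - 1) := (orderStat_le_iff_s8 p k _).mpr this
    calc orderStat p k ≤ c (r - 1) := h1
      _ ≤ c ((k : ℕ) + 1) := hmono (r - 1) ((k : ℕ) + 1) (by omega) (by omega) (by omega)
end
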